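/- arXiv:1706.05839 — 2 statements merged into one kernel-verified Lean document; each statement's English description precedes it below -/
import Mathlib

section
/- Define M(t) = δ·[A·P(t) + B·(1 − P(t))] + (1 − δ)·[Fγ·(μ·P(t) + (σ/√g)·f(t̃(t))) + Fα·(μ·(1 − P(t)) − (σ/√g)·f(t̃(t)))], where t̃(t) = (μ − t)√g/σ, P(t) = F(t̃(t)), σ > 0, g > 0, 0 < δ < 1, Fγ > Fα ≥ 0, and A, B, μ ∈ ℝ. Then M′(t₀) = 0 for t₀ = (δ/(1−δ))·(B − A)/(Fγ − Fα). -/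
open MeasureTheory ProbabilityTheory Set

noncomputable def stdPDF (x : ℝ) : ℝ := (Real.sqrt (2 * Real.pi))⁻¹ * Real.exp (-x ^ 2 / 2)
noncomputable def stdCDF (x : ℝ) : ℝ := ∫ u in Set.Iic x, stdPDF u

lemma continuous_stdPDF : Continuous stdPDF := by
  unfold stdPDF; fun_prop

lemma integrable_stdPDF : Integrable stdPDF := by
  have h : stdPDF = fun x => (Real.sqrt (2 * Real.pi))⁻¹ * Real.exp (-(1/2 : ℝ) * x ^ 2) := by
    funext x; unfold stdPDF; ring_nf
  rw [h]
  exact (integrable_exp_neg_mul_sq (by norm_num)).const_mul _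

lemma hasDerivAt_stdCDF (x : ℝ) : HasDerivAt stdCDF (stdPDF x) x := by
  have key : ∀ y : ℝ, stdCDF y = stdCDF 0 + ∫ u in (0:ℝ)..y, stdPDF u := by
    intro y
    have := intervalIntegral.integral_Iic_sub_Iic (μ := volume) (f := stdPDF)
      integrable_stdPDF.integrableOn integrable_stdPDF.integrableOn (a := 0) (b := y)
    unfold stdCDF; linarith [this]
  have hI : HasDerivAt (fun y => ∫ u in (0:ℝ)..y, stdPDF u) (stdPDF x) x :=
    intervalIntegral.integral_hasDerivAt_right
      (integrable_stdPDF.intervalIntegrable)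
      (continuous_stdPDF.aestronglyMeasurable.stronglyMeasurableAtFilter)
      continuous_stdPDF.continuousAt
  have : HasDerivAt (fun y => stdCDF 0 + ∫ u in (0:ℝ)..y, stdPDF u) (stdPDF x) x :=
    hI.const_add _
  exact (funext key : stdCDF = _) ▸ this

lemma hasDerivAt_stdPDF (x : ℝ) : HasDerivAt stdPDF (-x * stdPDF x) x := by
  have h1 : HasDerivAt (fun y : ℝ => -y ^ 2 / 2) (-x) x := by
    have := (hasDerivAt_pow 2 x).neg.div_const 2
    simpa using this.congr_deriv (by ring)
  have h2 := (h1.exp).const_mul (Real.sqrt (2 * Real.pi))⁻¹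
  unfold stdPDF
  exact h2.congr_deriv (by ring)

theorem stmt4 (μ σ g δ Fγ Fα A B : ℝ) (hσ : 0 < σ) (hg : 0 < g)
    (hδ0 : 0 < δ) (hδ1 : δ < 1) (hF : Fα < Fγ) (hFα : 0 ≤ Fα) :
    deriv (fun t : ℝ =>
      δ * (A * stdCDF ((μ - t) * Real.sqrt g / σ)
           + B * (1 - stdCDF ((μ - t) * Real.sqrt g / σ)))
      + (1 - δ) * (Fγ * (μ * stdCDF ((μ - t) * Real.sqrt g / σ)
                        + (σ / Real.sqrt g) * stdPDF ((μ - t) * Real.sqrt g / σ))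
                 + Fα * (μ * (1 - stdCDF ((μ - t) * Real.sqrt g / σ))
                        - (σ / Real.sqrt g) * stdPDF ((μ - t) * Real.sqrt g / σ))))
      ((δ / (1 - δ)) * (B - A) / (Fγ - Fα)) = 0 := by
  set t₀ : ℝ := (δ / (1 - δ)) * (B - A) / (Fγ - Fα) with ht₀
  set sq : ℝ := Real.sqrt g with hsq
  have hsq0 : 0 < sq := Real.sqrt_pos.mpr hg
  set x₀ : ℝ := (μ - t₀) * sq / σ with hx₀
  have hh : HasDerivAt (fun t : ℝ => (μ - t) * sq / σ) (-1 * sq / σ) t₀ := by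
    have : HasDerivAt (fun t : ℝ => μ - t) (-1) t₀ := by
      simpa using (hasDerivAt_id t₀).const_sub μ
    exact (this.mul_const sq).div_const σ
  have hC : HasDerivAt (fun t : ℝ => stdCDF ((μ - t) * sq / σ))
      (stdPDF x₀ * (-1 * sq / σ)) t₀ := by
    have := (hasDerivAt_stdCDF x₀).comp t₀ hh; exact this
  have hP : HasDerivAt (fun t : ℝ => stdPDF ((μ - t) * sq / σ))
      ((-x₀ * stdPDF x₀) * (-1 * sq / σ)) t₀ := by
    have := (hasDerivAt_stdPDF x₀).comp t₀ hh; exact this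
  set c : ℝ := stdPDF x₀ * (-1 * sq / σ) with hc
  set p : ℝ := (-x₀ * stdPDF x₀) * (-1 * sq / σ) with hp
  have hM : HasDerivAt (fun t : ℝ =>
      δ * (A * stdCDF ((μ - t) * sq / σ)
           + B * (1 - stdCDF ((μ - t) * sq / σ)))
      + (1 - δ) * (Fγ * (μ * stdCDF ((μ - t) * sq / σ)
                        + (σ / sq) * stdPDF ((μ - t) * sq / σ))
                 + Fα * (μ * (1 - stdCDF ((μ - t) * sq / σ))
                        - (σ / sq) * stdPDF ((μ - t) * sq / σ))))
      (δ * (A * c + B * (-c))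
       + (1 - δ) * (Fγ * (μ * c + (σ / sq) * p) + Fα * (μ * (-c) - (σ / sq) * p))) t₀ := by
    exact (((hC.const_mul A).add ((hC.const_sub 1).const_mul B)).const_mul δ).add
      (((((hC.const_mul μ).add (hP.const_mul (σ / sq))).const_mul Fγ).add
        ((((hC.const_sub 1).const_mul μ).sub (hP.const_mul (σ / sq))).const_mul Fα)).const_mul (1 - δ))
  rw [hM.deriv]
  rw [hc, hp, hx₀, ht₀]
  have h1δ : (1:ℝ) - δ ≠ 0 := by linarith
  have hFne : Fγ - Fα ≠ 0 := by linarith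
  field_simp
  ring
end

section
/- With M, t₀ as in the setting where M(t) = δ·[A·F(t̃(t)) + B·(1 − F(t̃(t)))] + (1−δ)·[Fγ·(μ·F(t̃(t)) + (σ/√g)f(t̃(t))) + Fα·(μ·(1−F(t̃(t))) − (σ/√g)f(t̃(t)))], t̃(t) = (μ−t)√g/σ, σ > 0, g > 0, 0 < δ < 1, Fγ > Fα, the second derivative of M at t₀ = (δ/(1−δ))(B−A)/(Fγ−Fα) is strictly negative; hence t₀ is a strict local maximum of M. -/
open MeasureTheory ProbabilityTheory Set

lemma stdPDF_pos (x : ℝ) : 0 < stdPDF x := by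
  have : 0 < Real.sqrt (2 * Real.pi) := Real.sqrt_pos.2 (by positivity)
  exact mul_pos (inv_pos.2 this) (Real.exp_pos _)

lemma M_hasDerivAt (μ σ g δ Fγ Fα A B : ℝ) (hσ : 0 < σ) (hg : 0 < g)
    (hδ1 : δ < 1) (hF : Fα < Fγ) (t : ℝ) :
    HasDerivAt (fun t =>
      δ * (A * stdCDF ((μ - t) * Real.sqrt g / σ)
           + B * (1 - stdCDF ((μ - t) * Real.sqrt g / σ)))
      + (1 - δ) * (Fγ * (μ * stdCDF ((μ - t) * Real.sqrt g / σ)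
                        + (σ / Real.sqrt g) * stdPDF ((μ - t) * Real.sqrt g / σ))
                 + Fα * (μ * (1 - stdCDF ((μ - t) * Real.sqrt g / σ))
                        - (σ / Real.sqrt g) * stdPDF ((μ - t) * Real.sqrt g / σ))))
      (Real.sqrt g / σ * stdPDF ((μ - t) * Real.sqrt g / σ) *
        ((1 - δ) * (Fγ - Fα) * ((δ / (1 - δ)) * (B - A) / (Fγ - Fα) - t))) t := by
  have hs : (0:ℝ) < Real.sqrt g := Real.sqrt_pos.2 hg
  set u : ℝ → ℝ := fun t => (μ - t) * Real.sqrt g / σ with hu_def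
  have hu : HasDerivAt u (-(Real.sqrt g / σ)) t := by
    have h0 : HasDerivAt (fun t : ℝ => μ - t) (-1) t := (hasDerivAt_id t).const_sub μ
    have := (h0.mul_const (Real.sqrt g)).div_const σ
    convert this using 1
    · rfl
    · rfl
    ring
  have hF' : HasDerivAt (fun t => stdCDF (u t)) (stdPDF (u t) * -(Real.sqrt g / σ)) t :=
    (hasDerivAt_stdCDF (u t)).comp t hu
  have hf' : HasDerivAt (fun t => stdPDF (u t))
      ((-(u t) * stdPDF (u t)) * -(Real.sqrt g / σ)) t :=
    (hasDerivAt_stdPDF (u t)).comp t hu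
  have h1 := ((hF'.const_mul A).add ((hF'.const_sub 1).const_mul B)).const_mul δ
  have h2 := ((((hF'.const_mul μ).add (hf'.const_mul (σ / Real.sqrt g))).const_mul Fγ).add
      ((((hF'.const_sub 1).const_mul μ).sub (hf'.const_mul (σ / Real.sqrt g))).const_mul
        Fα)).const_mul (1 - δ)
  have := h1.add h2
  convert this using 1
  · rfl
  · rfl
  · rfl
  have hδ' : (1:ℝ) - δ ≠ 0 := by linarith
  have hFd : Fγ - Fα ≠ 0 := by linarith
  rw [hu_def]
  field_simp
  ring

theorem stmt5 (μ σ g δ Fγ Fα A B : ℝ) (hσ : 0 < σ) (hg : 0 < g)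
    (hδ0 : 0 < δ) (hδ1 : δ < 1) (hF : Fα < Fγ) :
    let M : ℝ → ℝ := fun t =>
      δ * (A * stdCDF ((μ - t) * Real.sqrt g / σ)
           + B * (1 - stdCDF ((μ - t) * Real.sqrt g / σ)))
      + (1 - δ) * (Fγ * (μ * stdCDF ((μ - t) * Real.sqrt g / σ)
                        + (σ / Real.sqrt g) * stdPDF ((μ - t) * Real.sqrt g / σ))
                 + Fα * (μ * (1 - stdCDF ((μ - t) * Real.sqrt g / σ))
                        - (σ / Real.sqrt g) * stdPDF ((μ - t) * Real.sqrt g / σ)))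
    let t₀ : ℝ := (δ / (1 - δ)) * (B - A) / (Fγ - Fα)
    deriv (deriv M) t₀ < 0 ∧ ∀ᶠ t in nhdsWithin t₀ {t₀}ᶜ, M t < M t₀ := by
  intro M t₀
  have hs : (0:ℝ) < Real.sqrt g := Real.sqrt_pos.2 hg
  have hc : (0:ℝ) < Real.sqrt g / σ := div_pos hs hσ
  have hK : (0:ℝ) < (1 - δ) * (Fγ - Fα) := by nlinarith
  set u : ℝ → ℝ := fun t => (μ - t) * Real.sqrt g / σ with hu_def
  set φ : ℝ → ℝ := fun t =>
    Real.sqrt g / σ * stdPDF (u t) * ((1 - δ) * (Fγ - Fα) * (t₀ - t)) with hφ_def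
  have key : ∀ t, HasDerivAt M (φ t) t := fun t =>
    M_hasDerivAt μ σ g δ Fγ Fα A B hσ hg hδ1 hF t
  have hderiv : deriv M = φ := funext fun t => (key t).deriv
  constructor
  · -- second derivative at t₀
    rw [hderiv]
    have hu : HasDerivAt u (-(Real.sqrt g / σ)) t₀ := by
      have h0 : HasDerivAt (fun t : ℝ => μ - t) (-1) t₀ := (hasDerivAt_id t₀).const_sub μ
      have := (h0.mul_const (Real.sqrt g)).div_const σ
      convert this using 1
      · rfl
      · rfl
      ring
    have hf' : HasDerivAt (fun t => stdPDF (u t))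
        ((-(u t₀) * stdPDF (u t₀)) * -(Real.sqrt g / σ)) t₀ :=
      (hasDerivAt_stdPDF (u t₀)).comp t₀ hu
    have g1 := hf'.const_mul (Real.sqrt g / σ)
    have g2 : HasDerivAt (fun t : ℝ => (1 - δ) * (Fγ - Fα) * (t₀ - t))
        ((1 - δ) * (Fγ - Fα) * -1) t₀ := ((hasDerivAt_id t₀).const_sub t₀).const_mul _
    have hφ' := g1.mul g2
    rw [show deriv φ t₀ = _ from hφ'.deriv]
    have h0 : t₀ - t₀ = 0 := sub_self t₀
    have := stdPDF_pos (u t₀)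
    rw [h0]
    nlinarith [mul_pos hc this, mul_pos (mul_pos hc this) hK]
  · -- strict local max
    have hcont : Continuous M := by
      have : Differentiable ℝ M := fun t => (key t).differentiableAt
      exact this.continuous
    have hmono : StrictMonoOn M (Iic t₀) := by
      apply strictMonoOn_of_deriv_pos (convex_Iic t₀) hcont.continuousOn
      intro x hx
      rw [interior_Iic] at hx
      rw [hderiv]
      have := stdPDF_pos (u x)
      have : 0 < t₀ - x := sub_pos.2 hx
      exact mul_pos (mul_pos hc (stdPDF_pos (u x))) (mul_pos hK this)
    have hanti : StrictAntiOn M (Ici t₀) := by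
      apply strictAntiOn_of_deriv_neg (convex_Ici t₀) hcont.continuousOn
      intro x hx
      rw [interior_Ici] at hx
      rw [hderiv]
      have h1 : t₀ - x < 0 := sub_neg.2 hx
      have h2 := mul_pos (mul_pos hc (stdPDF_pos (u x))) hK
      show Real.sqrt g / σ * stdPDF (u x) * ((1 - δ) * (Fγ - Fα) * (t₀ - x)) < 0
      nlinarith
    filter_upwards [self_mem_nhdsWithin] with t ht
    rcases lt_or_gt_of_ne (ht : t ≠ t₀) with h | h
    · exact hmono (mem_Iic.2 h.le) (mem_Iic.2 le_rfl) h
    · exact hanti (mem_Ici.2 le_rfl) (mem_Ici.2 h.le) h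
end
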